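/- Let m ≥ 1 and B ≥ 1 be integers, let A be a finite set, and let s : A → ℕ satisfy s(a) ≥ 1 for all a ∈ A and Σ_{a∈A} s(a) = mB. Let Z be a finite set of variables equipped with maps p : Z → {1,…,m}, σ : Z → {0,1}, q : Z → A, and τ : Z → {0,1} such that for every i and every b ∈ {0,1} the set {z : p(z)=i, σ(z)=b} has exactly B elements, and for every a ∈ A and every b ∈ {0,1} the set {z : q(z)=a, τ(z)=b} has exactly s(a) elements. Define Boolean functions over Z by S(α) = true iff α(z) ≠ α(z') whenever p(z) = p(z') and σ(z) ≠ σ(z'), and U(α) = true iff α(z) ≠ α(z') whenever q(z) = q(z') and τ(z) ≠ τ(z'). Then S isomorphically implies U if and only if there is a map c : A → {1,…,m} such that Σ_{a : c(a)=i} s(a) = B for every i ∈ {1,…,m}. -/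

import Mathlib

lemma aux_split {Z : Type*} [Fintype Z] (t : Z → Bool) (Pr : Z → Prop) [DecidablePred Pr] :
    (Finset.univ.filter Pr).card
      = (Finset.univ.filter fun z => Pr z ∧ t z = false).card
        + (Finset.univ.filter fun z => Pr z ∧ t z = true).card := by
  classical
  have h := Finset.card_filter_add_card_filter_not
    (s := Finset.univ.filter Pr) (p := fun z => t z = false)
  rw [Finset.filter_filter, Finset.filter_filter] at h
  have h2 : (Finset.univ.filter fun z => Pr z ∧ ¬ t z = false)
      = (Finset.univ.filter fun z => Pr z ∧ t z = true) := by
    ext z; simp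
  rw [h2] at h
  omega

theorem stmt_13 (m B : ℕ) (hm : 1 ≤ m) (hB : 1 ≤ B)
    {A : Type*} [Fintype A] [DecidableEq A] (s : A → ℕ)
    (hs : ∀ a : A, 1 ≤ s a) (hsum : ∑ a : A, s a = m * B)
    {Z : Type*} [Fintype Z] [DecidableEq Z]
    (p : Z → Fin m) (σ : Z → Bool) (q : Z → A) (τ : Z → Bool)
    (hp : ∀ i : Fin m, ∀ b : Bool, (Finset.univ.filter fun z => p z = i ∧ σ z = b).card = B)
    (hq : ∀ a : A, ∀ b : Bool, (Finset.univ.filter fun z => q z = a ∧ τ z = b).card = s a)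
    (S U : (Z → Bool) → Bool)
    (hS : ∀ α : Z → Bool, S α = true ↔
      ∀ z z' : Z, p z = p z' → σ z ≠ σ z' → α z ≠ α z')
    (hU : ∀ α : Z → Bool, U α = true ↔
      ∀ z z' : Z, q z = q z' → τ z ≠ τ z' → α z ≠ α z') :
    (∃ π : Equiv.Perm Z, ∀ α : Z → Bool, S (α ∘ π) = true → U α = true) ↔
      (∃ c : A → Fin m, ∀ i : Fin m, ∑ a ∈ Finset.univ.filter fun a => c a = i, s a = B) := by
  classical
  have hcount : ∀ (c : A → Fin m) (i : Fin m) (b : Bool),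
      (Finset.univ.filter fun z => c (q z) = i ∧ τ z = b).card
        = ∑ a ∈ Finset.univ.filter (fun a => c a = i), s a := by
    intro c i b
    rw [Finset.card_eq_sum_card_fiberwise
      (f := q) (t := Finset.univ.filter fun a => c a = i)
      (fun z hz => by
        simp only [Finset.mem_coe, Finset.mem_filter, Finset.mem_univ, true_and] at hz ⊢
        exact hz.1)]
    refine Finset.sum_congr rfl ?_
    intro a ha
    have hca : c a = i := (Finset.mem_filter.mp ha).2
    rw [← hq a b]
    congr 1
    ext z
    simp only [Finset.mem_filter, Finset.mem_univ, true_and]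
    constructor
    · rintro ⟨⟨_, h2⟩, h3⟩; exact ⟨h3, h2⟩
    · rintro ⟨h1, h2⟩; exact ⟨⟨by rw [h1, hca], h2⟩, h1⟩
  constructor
  · rintro ⟨π, H⟩
    have hfiber : ∀ a : A, ∃ w : Z, q w = a := by
      intro a
      have h2 : 0 < (Finset.univ.filter fun z => q z = a ∧ τ z = false).card := by
        rw [hq a false]; exact hs a
      obtain ⟨w, hw⟩ := Finset.card_pos.mp h2
      exact ⟨w, (Finset.mem_filter.mp hw).2.1⟩
    -- key claim
    have key0 : ∀ w w' : Z, q w = q w' → τ w ≠ τ w' → p (π.symm w) = p (π.symm w') := by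
      intro w w' hqq hτ
      by_contra hne
      set ε : Fin m → Bool :=
        fun i => if i = p (π.symm w) then σ (π.symm w) else σ (π.symm w') with hε
      set α : Z → Bool := fun x => xor (σ (π.symm x)) (ε (p (π.symm x))) with hα
      have hSα : S (α ∘ π) = true := by
        rw [hS]
        intro z z' hpz hσ
        simp only [hα, Function.comp_apply, Equiv.symm_apply_apply]
        rw [hpz]
        cases hz : σ z <;> cases hz' : σ z' <;> simp_all
      have hUα := (hU α).mp (H α hSα) w w' hqq hτ
      apply hUα
      have e1 : ε (p (π.symm w)) = σ (π.symm w) := by rw [hε]; simp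
      have e2 : ε (p (π.symm w')) = σ (π.symm w') := by
        rw [hε]; simp only []
        rw [if_neg (fun h => hne h.symm)]
      simp only [hα, e1, e2, Bool.xor_self]
    have key : ∀ w w' : Z, q w = q w' → p (π.symm w) = p (π.symm w') := by
      intro w w' hqq
      by_cases hτ : τ w = τ w'
      · have h2 : 0 < (Finset.univ.filter fun z => q z = q w ∧ τ z = !(τ w)).card := by
          rw [hq (q w) (!(τ w))]; exact hs (q w)
        obtain ⟨w'', hw''⟩ := Finset.card_pos.mp h2
        obtain ⟨hq'', hτ''⟩ := (Finset.mem_filter.mp hw'').2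
        have h1 := key0 w w'' hq''.symm (by rw [hτ'']; simp)
        have h2 := key0 w' w'' (hqq ▸ hq''.symm) (by rw [hτ'', ← hτ]; simp)
        rw [h1, h2]
      · exact key0 w w' hqq hτ
    set c : A → Fin m := fun a => p (π.symm (Classical.choose (hfiber a))) with hcdef
    have hc : ∀ w : Z, c (q w) = p (π.symm w) := by
      intro w
      exact key _ w (Classical.choose_spec (hfiber (q w)))
    refine ⟨c, ?_⟩
    intro i
    have hcard1 : (Finset.univ.filter fun w => c (q w) = i).card
        = (Finset.univ.filter fun z => p z = i).card := by
      apply Finset.card_bij (fun w _ => π.symm w)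
      · intro w hw
        simp only [Finset.mem_filter, Finset.mem_univ, true_and] at hw ⊢
        rw [← hc w]; exact hw
      · intro w _ w' _ h
        exact π.symm.injective h
      · intro z hz
        refine ⟨π z, ?_, by simp⟩
        simp only [Finset.mem_filter, Finset.mem_univ, true_and] at hz ⊢
        rw [hc (π z)]; simpa using hz
    have hL : (Finset.univ.filter fun w => c (q w) = i).card
        = 2 * ∑ a ∈ Finset.univ.filter (fun a => c a = i), s a := by
      rw [aux_split τ (fun w => c (q w) = i), hcount c i false, hcount c i true]
      ring
    have hR : (Finset.univ.filter fun z => p z = i).card = 2 * B := by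
      rw [aux_split σ (fun z => p z = i), hp i false, hp i true]
      ring
    omega
  · rintro ⟨c, hc⟩
    have hcard : ∀ y : Fin m × Bool,
        Fintype.card {z // (c (q z), τ z) = y} = Fintype.card {z // (p z, σ z) = y} := by
      rintro ⟨i, b⟩
      rw [Fintype.card_subtype, Fintype.card_subtype]
      have h1 : (Finset.univ.filter fun z => (c (q z), τ z) = (i, b))
          = Finset.univ.filter fun z => c (q z) = i ∧ τ z = b := by
        ext z; simp [Prod.ext_iff]
      have h2 : (Finset.univ.filter fun z => (p z, σ z) = (i, b))
          = Finset.univ.filter fun z => p z = i ∧ σ z = b := by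
        ext z; simp [Prod.ext_iff]
      rw [h1, h2, hcount c i b, hc i, hp i b]
    let e : ∀ y : Fin m × Bool, {z // (c (q z), τ z) = y} ≃ {z // (p z, σ z) = y} :=
      fun y => Fintype.equivOfCardEq (hcard y)
    let ρ : Z ≃ Z :=
      ((Equiv.sigmaFiberEquiv (fun z => (c (q z), τ z))).symm.trans
        (Equiv.sigmaCongrRight e)).trans (Equiv.sigmaFiberEquiv (fun z => (p z, σ z)))
    have hρ : ∀ z : Z, (p (ρ z), σ (ρ z)) = (c (q z), τ z) := by
      intro z
      exact (e ((c (q z)), τ z) ⟨z, rfl⟩).2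
    refine ⟨ρ.symm, ?_⟩
    intro α hSα
    rw [hU]
    intro w w' hqq hτ
    have h1 := (Prod.mk.injEq _ _ _ _).mp (hρ w)
    have h2 := (Prod.mk.injEq _ _ _ _).mp (hρ w')
    have h := (hS _).mp hSα (ρ w) (ρ w')
      (by rw [h1.1, h2.1, hqq]) (by rw [h1.2, h2.2]; exact hτ)
    simpa using h
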